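/- Fix a real number λ > 0. Then there exist a real constant c > 1 and a natural number N such that for every integer n ≥ N and all positive real numbers a₁,…,aₙ with λ·(a₁ + ⋯ + aₙ) < 1, the number of points x = (x₁,…,xₙ) with nonnegative integer coordinates satisfying ∑ᵢ aᵢxᵢ < 1 is strictly greater than cⁿ. (In the paper's notation: for fixed λ > 0 there exists c > 1 with σ_{n,λ} > cⁿ for all sufficiently large n.) -/

import Mathlib

/-- For fixed λ > 0 there exist c > 1 and N such that σ_{n,λ} > cⁿ for all n ≥ N:
for every n ≥ N and all positive a₁,…,aₙ with λ·∑ aᵢ < 1, the number of lattice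
points x with ∑ aᵢxᵢ < 1 is strictly greater than cⁿ. -/
theorem stmt_4 (l : ℝ) (hl : 0 < l) :
    ∃ c : ℝ, 1 < c ∧ ∃ N : ℕ, ∀ n : ℕ, N ≤ n →
      ∀ a : Fin n → ℝ, (∀ i, 0 < a i) → l * ∑ i, a i < 1 →
        (c : ℝ) ^ n < (Set.ncard {x : Fin n → ℕ | ∑ i, a i * (x i : ℝ) < 1} : ℝ) := by
  set μ : ℝ := min l 1 with hμdef
  have hμ0 : 0 < μ := lt_min hl one_pos
  have hμ1 : μ ≤ 1 := min_le_right _ _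
  have hμl : μ ≤ l := min_le_left _ _
  refine ⟨(2:ℝ) ^ (μ/8 : ℝ), ?_, ⌈(8:ℝ)/μ⌉₊, ?_⟩
  · rw [Real.one_lt_rpow_iff_of_pos (by norm_num)]
    left
    exact ⟨by norm_num, by positivity⟩
  intro n hn a ha hla
  have hn8 : 8 ≤ μ * n := by
    have h1 : (8:ℝ)/μ ≤ (⌈(8:ℝ)/μ⌉₊ : ℝ) := Nat.le_ceil _
    have h2 : ((⌈(8:ℝ)/μ⌉₊ : ℕ) : ℝ) ≤ (n : ℝ) := Nat.cast_le.mpr hn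
    rw [div_le_iff₀ hμ0] at h1
    nlinarith
  have hn0 : (0:ℝ) < (n:ℝ) := by nlinarith
  set t : ℝ := 2/(μ*n) with htdef
  have hμn : (0:ℝ) < μ * n := by positivity
  have ht0 : 0 < t := by positivity
  have hsum : ∑ i, a i < 1/μ := by
    have h0 : (0:ℝ) ≤ ∑ i, a i := Finset.sum_nonneg fun i _ => (ha i).le
    rw [lt_div_iff₀ hμ0]
    nlinarith
  set S : Finset (Fin n) := Finset.univ.filter (fun i => a i ≤ t) with hSdef
  set C : Finset (Fin n) := Finset.univ.filter (fun i => t < a i) with hCdef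
  have hCcard : (C.card : ℝ) * t ≤ ∑ i ∈ C, a i := by
    have h := Finset.card_nsmul_le_sum C a t
      (fun i hi => (Finset.mem_filter.mp hi).2.le)
    simpa [nsmul_eq_mul] using h
  have hCsum : ∑ i ∈ C, a i ≤ ∑ i, a i :=
    Finset.sum_le_sum_of_subset_of_nonneg (Finset.subset_univ C) (fun i _ _ => (ha i).le)
  have hC2 : (C.card:ℝ) * 2 < (n:ℝ) := by
    have h : (C.card : ℝ) * t < 1/μ := lt_of_le_of_lt hCcard (lt_of_le_of_lt hCsum hsum)
    rw [htdef] at h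
    have h2 := mul_lt_mul_of_pos_right h hμn
    have h3 : (C.card:ℝ) * (2 / (μ * ↑n)) * (μ * ↑n) = (C.card:ℝ) * 2 := by field_simp
    have h4 : 1/μ * (μ * (n:ℝ)) = (n:ℝ) := by field_simp
    linarith
  have hSC : S.card + C.card = n := by
    have := Finset.card_filter_add_card_filter_not
      (s := (Finset.univ : Finset (Fin n))) (p := fun i => a i ≤ t)
    simpa using this
  have hScard : (n:ℝ)/2 < (S.card : ℝ) := by
    have : (S.card : ℝ) + (C.card : ℝ) = (n:ℝ) := by exact_mod_cast hSC
    linarith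
  set k : ℕ := ⌊μ*n/4⌋₊ with hkdef
  have hk : (k:ℝ) ≤ μ*n/4 := Nat.floor_le (by positivity)
  have hk8 : μ*n/8 < (k:ℝ) := by
    have := Nat.lt_floor_add_one (μ*n/4)
    have hkk : μ*n/4 - 1 < (k:ℝ) := by linarith
    linarith
  have hkS : k ≤ S.card := by
    have h1 : (k:ℝ) < (S.card : ℝ) := by nlinarith
    exact_mod_cast h1.le
  obtain ⟨S', hS'S, hS'card⟩ := Finset.exists_subset_card_eq hkS
  set f : Finset (Fin n) → (Fin n → ℕ) := fun T i => if i ∈ T then 1 else 0 with hfdef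
  have hfinj : Function.Injective f := by
    intro T T' h
    ext i
    have h2 := congrFun h i
    simp only [hfdef] at h2
    by_cases hT : i ∈ T <;> by_cases hT' : i ∈ T' <;> simp [hT, hT'] at h2 ⊢
  set F : Finset (Fin n → ℕ) := (S'.powerset).image f with hFdef
  have hFcard : F.card = 2^k := by
    rw [hFdef, Finset.card_image_of_injective _ hfinj, Finset.card_powerset, hS'card]
  have hsub : (↑F : Set (Fin n → ℕ)) ⊆ {x : Fin n → ℕ | ∑ i, a i * (x i : ℝ) < 1} := by
    intro x hx
    rw [Finset.mem_coe, hFdef, Finset.mem_image] at hx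
    obtain ⟨T, hT, rfl⟩ := hx
    rw [Finset.mem_powerset] at hT
    simp only [Set.mem_setOf_eq]
    have heq : ∑ i, a i * ((f T i : ℕ) : ℝ) = ∑ i ∈ T, a i := by
      have hcongr : ∀ i ∈ Finset.univ, a i * ((f T i : ℕ) : ℝ) = if i ∈ T then a i else 0 := by
        intro i _
        simp only [hfdef]
        split <;> simp
      rw [Finset.sum_congr rfl hcongr, Finset.sum_ite_mem, Finset.univ_inter]
    rw [heq]
    have hTS : T ⊆ S := hT.trans hS'S
    have hsum1 : ∑ i ∈ T, a i ≤ (T.card : ℝ) * t := by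
      have := Finset.sum_le_card_nsmul T a t (fun i hi => (Finset.mem_filter.mp (hTS hi)).2)
      simpa [nsmul_eq_mul] using this
    have hTk : (T.card : ℝ) ≤ (k:ℝ) := by
      exact_mod_cast hS'card ▸ Finset.card_le_card hT
    have h2 : (T.card : ℝ) * t ≤ (μ*n/4) * (2/(μ*n)) := by
      rw [htdef]
      apply mul_le_mul (hTk.trans hk) le_rfl ht0.le (by positivity)
    have h3 : (μ*n/4) * (2/(μ*n)) = 1/2 := by
      field_simp
      ring
    linarith
  have hfin : ({x : Fin n → ℕ | ∑ i, a i * (x i : ℝ) < 1}).Finite := by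
    apply Set.Finite.subset (Set.finite_Icc (0 : Fin n → ℕ) (fun i => ⌊1/(a i)⌋₊))
    intro x hx
    simp only [Set.mem_setOf_eq] at hx
    simp only [Set.mem_Icc]
    constructor
    · intro i; exact Nat.zero_le _
    · intro i
      apply Nat.le_floor
      have h1 : a i * (x i : ℝ) ≤ ∑ j, a j * (x j : ℝ) :=
        Finset.single_le_sum (f := fun j => a j * ((x j : ℕ) : ℝ))
          (fun j _ => mul_nonneg (ha j).le (Nat.cast_nonneg _)) (Finset.mem_univ i)
      rw [le_div_iff₀ (ha i), mul_comm]
      linarith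
  have h1 : ((2:ℝ) ^ (μ/8 : ℝ)) ^ n = (2:ℝ) ^ ((μ/8) * (n:ℝ) : ℝ) := by
    rw [← Real.rpow_natCast ((2:ℝ) ^ (μ/8:ℝ)) n, ← Real.rpow_mul (by norm_num)]
  have h2 : (2:ℝ) ^ ((μ/8) * (n:ℝ) : ℝ) < (2:ℝ) ^ ((k:ℝ)) := by
    apply Real.rpow_lt_rpow_of_exponent_lt one_lt_two
    have he : μ/8 * (n:ℝ) = μ*n/8 := by ring
    linarith
  have h3 : (2:ℝ) ^ ((k:ℝ)) = ((2^k : ℕ) : ℝ) := by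
    rw [Real.rpow_natCast]; push_cast; ring
  have h4 : ((2^k : ℕ) : ℝ) ≤ (Set.ncard {x : Fin n → ℕ | ∑ i, a i * (x i : ℝ) < 1} : ℝ) := by
    have h5 := Set.ncard_le_ncard hsub hfin
    rw [Set.ncard_coe_finset] at h5
    rw [← hFcard]
    exact_mod_cast h5
  rw [h1]
  linarith
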